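/- Let d2 > 0, y⋆ > 0, k > 3 and set d1 = 0. Consider the closed-loop system on ℝ² given by dx1/dτ = 1 - x2·u(x2), dx2/dτ = -d2·x2 + x1·u(x2), with the static nonlinear voltage feedback u(x2) = k·x2/(x2² + (k - 1)·y⋆²). Then the point x⋆ := (d2·y⋆², y⋆) is an asymptotically stable equilibrium: it is an equilibrium, it is Lyapunov stable (for every ε > 0 there is δ > 0 such that every solution starting within distance δ of x⋆ stays within distance ε for all forward time), and there is a neighborhood of x⋆ from which every solution converges to x⋆ as τ → ∞. -/

import Mathlib

set_option maxHeartbeats 1000000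

noncomputable def lyapV (d2 y k ε : ℝ) (x : ℝ × ℝ) : ℝ :=
  (x.1 - d2*y^2)^2/2 + ((k-1)/k) * ((x.2)^2/2 - y^2 * Real.log x.2 - y^2/2 + y^2 * Real.log y)
    - ε*(x.1 - d2*y^2)*(x.2 - y)

lemma lyapV_hasDerivAt (d2 y k ε : ℝ) (χ : ℝ → ℝ × ℝ) (v : ℝ × ℝ) (τ : ℝ)
    (h : HasDerivAt χ v τ) (hx2 : (χ τ).2 ≠ 0) :
    HasDerivAt (fun t => lyapV d2 y k ε (χ t))
      (((χ τ).1 - d2*y^2 - ε*((χ τ).2 - y)) * v.1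
        + ((k-1)/k * ((χ τ).2 - y^2/(χ τ).2) - ε*((χ τ).1 - d2*y^2)) * v.2) τ := by
  have h1 : HasDerivAt (fun t => (χ t).1 - d2*y^2) v.1 τ := h.fst.sub_const _
  have h2 : HasDerivAt (fun t => (χ t).2) v.2 τ := h.snd
  have hsq : HasDerivAt (fun t => ((χ t).1 - d2*y^2)^2/2)
      ((2 * ((χ τ).1 - d2*y^2) ^ 1 * v.1)/2) τ := (h1.pow 2).div_const 2
  have hlog : HasDerivAt (fun t => Real.log ((χ t).2)) (v.2/(χ τ).2) τ := h2.log hx2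
  have hmid : HasDerivAt (fun t => ((χ t).2)^2/2 - y^2 * Real.log ((χ t).2) - y^2/2
      + y^2 * Real.log y)
      ((2 * ((χ τ).2) ^ 1 * v.2)/2 - y^2 * (v.2/(χ τ).2)) τ := by
    have := ((h2.pow 2).div_const 2).sub (hlog.const_mul (y^2))
    simpa using (this.sub_const (y^2/2)).add_const (y^2 * Real.log y)
  have hcross : HasDerivAt (fun t => ε*((χ t).1 - d2*y^2)*((χ t).2 - y))
      (ε * v.1 * ((χ τ).2 - y) + ε*((χ τ).1 - d2*y^2) * v.2) τ := by
    have := ((h1.const_mul ε).mul (h2.sub_const y))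
    exact this.congr_deriv (by ring)
  have := (hsq.add (hmid.const_mul ((k-1)/k))).sub hcross
  refine this.congr_deriv ?_
  ring

lemma lyapV_bounds_core (y k ε z1 z2 : ℝ) (hy : 0 < y) (hk : 3 < k)
    (hε : 0 < ε) (hε2 : ε ≤ 1/4) (hstrip : |z2| ≤ y/2) :
    (1/8) * (z1^2 + z2^2) ≤
      z1^2/2 + ((k-1)/k) * ((y+z2)^2/2 - y^2 * Real.log (y+z2) - y^2/2 + y^2 * Real.log y) - ε*z1*z2 ∧
      z1^2/2 + ((k-1)/k) * ((y+z2)^2/2 - y^2 * Real.log (y+z2) - y^2/2 + y^2 * Real.log y) - ε*z1*z2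
      ≤ 3 * (z1^2 + z2^2) := by
  obtain ⟨hs1, hs2⟩ := abs_le.1 hstrip
  have hx2pos : (0:ℝ) < y + z2 := by linarith
  have hlog1 : Real.log (y+z2) - Real.log y ≤ (y+z2)/y - 1 := by
    rw [← Real.log_div hx2pos.ne' hy.ne']
    exact Real.log_le_sub_one_of_pos (div_pos hx2pos hy)
  have hlog1' : y^2 * (Real.log (y+z2) - Real.log y) ≤ y*(y+z2) - y^2 := by
    have h := mul_le_mul_of_nonneg_left hlog1 (by positivity : (0:ℝ) ≤ y^2)
    have e : y^2*((y+z2)/y - 1) = y*(y+z2) - y^2 := by field_simp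
    linarith [e ▸ h]
  have hφlow : z2^2/2 ≤ (y+z2)^2/2 - y^2 * Real.log (y+z2) - y^2/2 + y^2 * Real.log y := by
    nlinarith [hlog1']
  have hlog2 : Real.log y - Real.log (y+z2) ≤ y/(y+z2) - 1 := by
    rw [← Real.log_div hy.ne' hx2pos.ne']
    exact Real.log_le_sub_one_of_pos (div_pos hy hx2pos)
  have hlog2' : y^2 * (Real.log y - Real.log (y+z2)) ≤ y^3/(y+z2) - y^2 := by
    have h := mul_le_mul_of_nonneg_left hlog2 (by positivity : (0:ℝ) ≤ y^2)
    have e : y^2*(y/(y+z2) - 1) = y^3/(y+z2) - y^2 := by field_simp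
    linarith [e ▸ h]
  have hkey : (y+z2)^3/2 + y^3 - (3/2)*y^2*(y+z2) ≤ (5/2)*z2^2*(y+z2) := by
    nlinarith [mul_nonneg (sq_nonneg z2) (by linarith : (0:ℝ) ≤ 2*(y+z2) - y)]
  have hdiv : ((y+z2)^3/2 + y^3 - (3/2)*y^2*(y+z2))/(y+z2) ≤ (5/2)*z2^2 := by
    rw [div_le_iff₀ hx2pos]; linarith
  have e3 : ((y+z2)^3/2 + y^3 - (3/2)*y^2*(y+z2))/(y+z2)
      = (y+z2)^2/2 + y^3/(y+z2) - (3/2)*y^2 := by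
    field_simp
  have hφhigh : (y+z2)^2/2 - y^2 * Real.log (y+z2) - y^2/2 + y^2 * Real.log y
      ≤ (5/2)*z2^2 := by
    have h4 := e3 ▸ hdiv
    linarith [hlog2']
  have hkpos : (0:ℝ) < k := by linarith
  have hc2a : 2/3 ≤ (k-1)/k := by rw [le_div_iff₀ hkpos]; linarith
  have hc2b : (k-1)/k ≤ 1 := by rw [div_le_one hkpos]; linarith
  have hφ0 : (0:ℝ) ≤ (y+z2)^2/2 - y^2 * Real.log (y+z2) - y^2/2 + y^2 * Real.log y := by
    nlinarith [hφlow]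
  set φ := (y+z2)^2/2 - y^2 * Real.log (y+z2) - y^2/2 + y^2 * Real.log y with hφdef
  clear_value φ
  have hcφlow : z2^2/3 ≤ ((k-1)/k) * φ := by
    have h1 := mul_le_mul_of_nonneg_right hc2a hφ0
    linarith
  have hcφhigh : ((k-1)/k) * φ ≤ (5/2)*z2^2 := by
    have h1 := mul_le_mul_of_nonneg_right hc2b hφ0
    linarith
  constructor
  · nlinarith [hcφlow, mul_nonneg hε.le (sq_nonneg (z1-z2)),
      mul_nonneg (by linarith : (0:ℝ) ≤ 1/4 - ε) (sq_nonneg z1),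
      mul_nonneg (by linarith : (0:ℝ) ≤ 1/4 - ε) (sq_nonneg z2)]
  · nlinarith [hcφhigh, mul_nonneg hε.le (sq_nonneg (z1+z2)),
      mul_nonneg (by linarith : (0:ℝ) ≤ 1/4 - ε) (sq_nonneg z1),
      mul_nonneg (by linarith : (0:ℝ) ≤ 1/4 - ε) (sq_nonneg z2)]

lemma decay_cert (d2 y k ε x1 x2 : ℝ)
    (F1 : (0:ℝ) ≤ ε * (k*y*(x1-d2*y^2) - 2*d2*x2*(x2-y)*(x2+y))^2)
    (F2 : (0:ℝ) ≤ ε*k^2*y*(x1-d2*y^2)^2*(x2 - y/2))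
    (F3 : (0:ℝ) ≤ ε*k*y*(k-1)*(x2-y)^2*(y/2 - (x2-y)))
    (F4 : (0:ℝ) ≤ y*(k-1)*d2*(x2-y)^2*((x2+y)^2 - (9/4)*y^2))
    (F5 : (0:ℝ) ≤ ε*d2^2*(x2-y)^2*((225/16)*y^4 - x2^2*(x2+y)^2))
    (F6z : ε*(5*k*y^2*(k-1)/2 + (225/16)*d2^2*y^4 + k^2*y^2/4)*(x2-y)^2
            ≤ (9/4)*(k-1)*d2*y^3*(x2-y)^2) :
    y*( ε*(k-1)*(x2-y)^2*(x2+y)*k - (k-1)*d2*(x2-y)^2*(x2+y)^2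
      - ε*k^2*x2*(x1-d2*y^2)^2 + ε*d2*x2*(x1-d2*y^2)*(x2-y)*(x2+y)*k )
      ≤ -(ε*k^2*y^2/4) * ((x1-d2*y^2)^2 + (x2-y)^2) := by
  linarith [F1, F2, F3, F4, F5, F6z]

lemma decay_last (c q D M : ℝ) (hc : 0 ≤ c) (hq : 0 ≤ q) (hDle : D ≤ M) :
    -(c*M) * q ≤ -c * q * D := by nlinarith [mul_nonneg (mul_nonneg hc hq) (sub_nonneg.mpr hDle)]

lemma lyapV_decay (d2 y k ε x1 x2 : ℝ) (hd2 : 0 < d2) (hy : 0 < y) (hk : 3 < k)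
    (hε : 0 < ε)
    (hεA : ε * ((k-1)*(5*y/2) + (225/16)*d2^2*y^3/k + k*y/4) ≤ (9/4)*(k-1)*d2*y^2/k)
    (hstrip : |x2 - y| ≤ y/2) :
    (x1 - d2*y^2 - ε*(x2 - y)) * (1 - x2 * (k*x2/(x2^2+(k-1)*y^2)))
      + ((k-1)/k * (x2 - y^2/x2) - ε*(x1 - d2*y^2)) * (-d2*x2 + x1 * (k*x2/(x2^2+(k-1)*y^2)))
    ≤ -(ε/(8*y)) * ((x1 - d2*y^2)^2 + (x2 - y)^2) := by
  obtain ⟨hs1, hs2⟩ := abs_le.1 hstrip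
  have hkpos : (0:ℝ) < k := by linarith
  have hx2pos : (0:ℝ) < x2 := by linarith
  have hky : (0:ℝ) < k*y := by positivity
  have hD : (0:ℝ) < x2^2+(k-1)*y^2 := by nlinarith [sq_nonneg x2, mul_pos (show (0:ℝ)<k-1 by linarith) (pow_pos hy 2)]
  -- certificate facts
  have F6 := mul_le_mul_of_nonneg_left hεA hky.le
  have e1 : k*y*(ε*((k-1)*(5*y/2) + (225/16)*d2^2*y^3/k + k*y/4))
      = ε*(5*k*y^2*(k-1)/2 + (225/16)*d2^2*y^4 + k^2*y^2/4) := by field_simp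
  have e2 : k*y*((9/4)*(k-1)*d2*y^2/k) = (9/4)*(k-1)*d2*y^3 := by field_simp
  rw [e1, e2] at F6
  have F6z := mul_le_mul_of_nonneg_right F6 (sq_nonneg (x2-y))
  have F1 : (0:ℝ) ≤ ε * (k*y*(x1-d2*y^2) - 2*d2*x2*(x2-y)*(x2+y))^2 :=
    mul_nonneg hε.le (sq_nonneg _)
  have F2 : (0:ℝ) ≤ ε*k^2*y*(x1-d2*y^2)^2*(x2 - y/2) := by
    have h : (0:ℝ) ≤ x2 - y/2 := by linarith
    positivity
  have F3 : (0:ℝ) ≤ ε*k*y*(k-1)*(x2-y)^2*(y/2 - (x2-y)) := by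
    have h1 : (0:ℝ) ≤ y/2 - (x2-y) := by linarith
    have h2 : (0:ℝ) ≤ k-1 := by linarith
    positivity
  have F4 : (0:ℝ) ≤ y*(k-1)*d2*(x2-y)^2*((x2+y)^2 - (9/4)*y^2) := by
    have h1 : (0:ℝ) ≤ (x2+y)^2 - (9/4)*y^2 := by nlinarith
    have h2 : (0:ℝ) ≤ k-1 := by linarith
    positivity
  have F5 : (0:ℝ) ≤ ε*d2^2*(x2-y)^2*((225/16)*y^4 - x2^2*(x2+y)^2) := by
    have h1 : x2*(x2+y) ≤ 15*y^2/4 := by nlinarith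
    have h0 : (0:ℝ) ≤ x2*(x2+y) := by positivity
    have h2 : (0:ℝ) ≤ (225/16)*y^4 - x2^2*(x2+y)^2 := by nlinarith
    positivity
  have hP := decay_cert d2 y k ε x1 x2 F1 F2 F3 F4 F5 F6z
  clear F1 F2 F3 F4 F5 F6 F6z e1 e2
  -- rewrite LHS as polynomial over positive denominator
  have hmul : ((x1 - d2*y^2 - ε*(x2 - y)) * (1 - x2 * (k*x2/(x2^2+(k-1)*y^2)))
      + ((k-1)/k * (x2 - y^2/x2) - ε*(x1 - d2*y^2)) * (-d2*x2 + x1 * (k*x2/(x2^2+(k-1)*y^2))))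
      * ((x2^2+(k-1)*y^2)*(k*y))
      = y*( ε*(k-1)*(x2-y)^2*(x2+y)*k - (k-1)*d2*(x2-y)^2*(x2+y)^2
          - ε*k^2*x2*(x1-d2*y^2)^2 + ε*d2*x2*(x1-d2*y^2)*(x2-y)*(x2+y)*k ) := by
    have hDne := hD.ne'
    generalize hDdef : x2^2+(k-1)*y^2 = D at hDne ⊢
    field_simp
    subst hDdef
    ring
  have hDle : x2^2+(k-1)*y^2 ≤ 2*k*y^2 := by nlinarith
  have hDle' : (x2^2+(k-1)*y^2)*(k*y) ≤ (2*k*y^2)*(k*y) :=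
    mul_le_mul_of_nonneg_right hDle hky.le
  have hc : (0:ℝ) ≤ ε/(8*y) := by positivity
  have hq : (0:ℝ) ≤ (x1-d2*y^2)^2 + (x2-y)^2 := by positivity
  have hDky : (0:ℝ) < (x2^2+(k-1)*y^2)*(k*y) := by positivity
  refine le_of_mul_le_mul_right ?_ hDky
  rw [hmul]
  have hid : ε*k^2*y^2/4 = (ε/(8*y))*((2*k*y^2)*(k*y)) := by field_simp; ring
  calc y*( ε*(k-1)*(x2-y)^2*(x2+y)*k - (k-1)*d2*(x2-y)^2*(x2+y)^2
        - ε*k^2*x2*(x1-d2*y^2)^2 + ε*d2*x2*(x1-d2*y^2)*(x2-y)*(x2+y)*k )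
      ≤ -(ε*k^2*y^2/4) * ((x1-d2*y^2)^2 + (x2-y)^2) := hP
    _ = -((ε/(8*y))*((2*k*y^2)*(k*y))) * ((x1-d2*y^2)^2 + (x2-y)^2) := by rw [hid]
    _ ≤ -(ε/(8*y)) * ((x1-d2*y^2)^2 + (x2-y)^2) * ((x2^2+(k-1)*y^2)*(k*y)) :=
        decay_last (ε/(8*y)) ((x1-d2*y^2)^2 + (x2-y)^2) ((x2^2+(k-1)*y^2)*(k*y))
          ((2*k*y^2)*(k*y)) hc hq hDle'

lemma lyapV_bounds (d2 y k ε : ℝ) (hy : 0 < y) (hk : 3 < k)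
    (hε : 0 < ε) (hε2 : ε ≤ 1/4) (x : ℝ × ℝ) (hstrip : |x.2 - y| ≤ y/2) :
    (1/8) * ((x.1 - d2*y^2)^2 + (x.2 - y)^2) ≤ lyapV d2 y k ε x ∧
      lyapV d2 y k ε x ≤ 3 * ((x.1 - d2*y^2)^2 + (x.2 - y)^2) := by
  have h := lyapV_bounds_core y k ε (x.1 - d2*y^2) (x.2 - y) hy hk hε hε2 hstrip
  have e : y + (x.2 - y) = x.2 := by ring
  rw [e] at h
  unfold lyapV
  exact ⟨by linarith [h.1], by linarith [h.2]⟩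

/-- Exponential decay of the Lyapunov function along solutions staying in the strip. -/
lemma lyapV_mono (d2 y k ε : ℝ) (hd2 : 0 < d2) (hy : 0 < y) (hk : 3 < k)
    (hε : 0 < ε) (hε2 : ε ≤ 1/4)
    (hεA : ε * ((k-1)*(5*y/2) + (225/16)*d2^2*y^3/k + k*y/4) ≤ (9/4)*(k-1)*d2*y^2/k)
    (χ : ℝ → ℝ × ℝ)
    (hχ : ∀ τ : ℝ, HasDerivAt χ
      (1 - (χ τ).2 * (k*(χ τ).2/((χ τ).2^2+(k-1)*y^2)),
        -d2*(χ τ).2 + (χ τ).1 * (k*(χ τ).2/((χ τ).2^2+(k-1)*y^2))) τ)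
    (T : ℝ) (hT : 0 ≤ T)
    (hstrip : ∀ s ∈ Set.Icc (0:ℝ) T, |(χ s).2 - y| ≤ y/2) :
    lyapV d2 y k ε (χ T) * Real.exp ((ε/(24*y)) * T) ≤ lyapV d2 y k ε (χ 0) := by
  set lam := ε/(24*y) with hlam
  have hlam0 : 0 ≤ lam := by positivity
  have key : ∀ s : ℝ, |(χ s).2 - y| ≤ y/2 →
      ∃ d, HasDerivAt (fun t => lyapV d2 y k ε (χ t) * Real.exp (lam * t)) d s ∧ d ≤ 0 := by
    intro s hs
    obtain ⟨hs1, hs2⟩ := abs_le.1 hs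
    have hx2pos : (0:ℝ) < (χ s).2 := by linarith
    have hV := lyapV_hasDerivAt d2 y k ε χ _ s (hχ s) hx2pos.ne'
    have hexp : HasDerivAt (fun t => Real.exp (lam * t)) (Real.exp (lam * s) * lam) s := by
      simpa using (((hasDerivAt_id s).const_mul lam).exp)
    refine ⟨_, hV.mul hexp, ?_⟩
    have hdecay := lyapV_decay d2 y k ε (χ s).1 (χ s).2 hd2 hy hk hε hεA hs
    have hb := lyapV_bounds d2 y k ε hy hk hε hε2 (χ s) hs
    have hexp0 : (0:ℝ) < Real.exp (lam * s) := Real.exp_pos _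
    have hlamV : lam * lyapV d2 y k ε (χ s)
        ≤ (ε/(8*y)) * (((χ s).1 - d2*y^2)^2 + ((χ s).2 - y)^2) := by
      have h1 : lam * lyapV d2 y k ε (χ s)
          ≤ lam * (3 * (((χ s).1 - d2*y^2)^2 + ((χ s).2 - y)^2)) :=
        mul_le_mul_of_nonneg_left hb.2 hlam0
      have h2 : lam * (3 * (((χ s).1 - d2*y^2)^2 + ((χ s).2 - y)^2))
          = (ε/(8*y)) * (((χ s).1 - d2*y^2)^2 + ((χ s).2 - y)^2) := by
        rw [hlam]; field_simp; ring
      linarith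
    have hg' : (((χ s).1 - d2*y^2 - ε*((χ s).2 - y)) *
          (1 - (χ s).2 * (k*(χ s).2/((χ s).2^2+(k-1)*y^2)),
            -d2*(χ s).2 + (χ s).1 * (k*(χ s).2/((χ s).2^2+(k-1)*y^2))).1
        + ((k-1)/k * ((χ s).2 - y^2/(χ s).2) - ε*((χ s).1 - d2*y^2)) *
          (1 - (χ s).2 * (k*(χ s).2/((χ s).2^2+(k-1)*y^2)),
            -d2*(χ s).2 + (χ s).1 * (k*(χ s).2/((χ s).2^2+(k-1)*y^2))).2)
        + lam * lyapV d2 y k ε (χ s) ≤ 0 := by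
      simp only [Prod.fst, Prod.snd] at *
      linarith [hdecay, hlamV]
    calc _ = Real.exp (lam*s) * ((((χ s).1 - d2*y^2 - ε*((χ s).2 - y)) *
          (1 - (χ s).2 * (k*(χ s).2/((χ s).2^2+(k-1)*y^2)),
            -d2*(χ s).2 + (χ s).1 * (k*(χ s).2/((χ s).2^2+(k-1)*y^2))).1
        + ((k-1)/k * ((χ s).2 - y^2/(χ s).2) - ε*((χ s).1 - d2*y^2)) *
          (1 - (χ s).2 * (k*(χ s).2/((χ s).2^2+(k-1)*y^2)),
            -d2*(χ s).2 + (χ s).1 * (k*(χ s).2/((χ s).2^2+(k-1)*y^2))).2)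
        + lam * lyapV d2 y k ε (χ s)) := by ring
      _ ≤ 0 := by
          apply mul_nonpos_of_nonneg_of_nonpos (Real.exp_pos _).le hg'
  have hanti : AntitoneOn (fun t => lyapV d2 y k ε (χ t) * Real.exp (lam * t))
      (Set.Icc 0 T) := by
    apply antitoneOn_of_deriv_nonpos (convex_Icc 0 T)
    · intro s hs
      obtain ⟨d, hd, _⟩ := key s (hstrip s hs)
      exact hd.continuousAt.continuousWithinAt
    · intro s hs
      rw [interior_Icc] at hs
      obtain ⟨d, hd, _⟩ := key s (hstrip s (Set.Ioo_subset_Icc_self hs))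
      exact hd.differentiableAt.differentiableWithinAt
    · intro s hs
      rw [interior_Icc] at hs
      obtain ⟨d, hd, hd0⟩ := key s (hstrip s (Set.Ioo_subset_Icc_self hs))
      rw [hd.deriv]; exact hd0
  have h01 : (0:ℝ) ∈ Set.Icc (0:ℝ) T := ⟨le_refl _, hT⟩
  have hT1 : T ∈ Set.Icc (0:ℝ) T := ⟨hT, le_refl _⟩
  have := hanti h01 hT1 hT
  simpa using this

/-- Basic norm facts for the state error. -/
lemma err_facts (χ : ℝ → ℝ × ℝ) (d2 y : ℝ) (s : ℝ) :
    |(χ s).1 - d2*y^2| ≤ ‖χ s - (d2*y^2, y)‖ ∧ |(χ s).2 - y| ≤ ‖χ s - (d2*y^2, y)‖ ∧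
    ‖χ s - (d2*y^2, y)‖^2 ≤ ((χ s).1 - d2*y^2)^2 + ((χ s).2 - y)^2 := by
  have h1 : ((χ s) - (d2*y^2, y)).1 = (χ s).1 - d2*y^2 := rfl
  have h2 : ((χ s) - (d2*y^2, y)).2 = (χ s).2 - y := rfl
  have hf := norm_fst_le ((χ s) - (d2*y^2, y))
  have hs := norm_snd_le ((χ s) - (d2*y^2, y))
  rw [h1, Real.norm_eq_abs] at hf
  rw [h2, Real.norm_eq_abs] at hs
  refine ⟨hf, hs, ?_⟩
  have hmax : ‖χ s - (d2*y^2, y)‖ = max |(χ s).1 - d2*y^2| |(χ s).2 - y| := by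
    rw [Prod.norm_def, h1, h2, Real.norm_eq_abs, Real.norm_eq_abs]
  rcases max_choice |(χ s).1 - d2*y^2| |(χ s).2 - y| with h | h <;>
    rw [hmax, h] <;>
    nlinarith [sq_abs ((χ s).1 - d2*y^2), sq_abs ((χ s).2 - y),
      sq_nonneg ((χ s).1 - d2*y^2), sq_nonneg ((χ s).2 - y)]

/-- Invariance: solutions starting close to the equilibrium stay close. -/
lemma lyapV_invariant (d2 y k ε : ℝ) (hd2 : 0 < d2) (hy : 0 < y) (hk : 3 < k)
    (hε : 0 < ε) (hε2 : ε ≤ 1/4)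
    (hεA : ε * ((k-1)*(5*y/2) + (225/16)*d2^2*y^3/k + k*y/4) ≤ (9/4)*(k-1)*d2*y^2/k)
    (χ : ℝ → ℝ × ℝ)
    (hχ : ∀ τ : ℝ, HasDerivAt χ
      (1 - (χ τ).2 * (k*(χ τ).2/((χ τ).2^2+(k-1)*y^2)),
        -d2*(χ τ).2 + (χ τ).1 * (k*(χ τ).2/((χ τ).2^2+(k-1)*y^2))) τ)
    (r : ℝ) (hr0 : 0 < r) (hry : r ≤ y)
    (h0 : ‖χ 0 - (d2*y^2, y)‖ < r/16) :
    ∀ τ : ℝ, 0 ≤ τ → ‖χ τ - (d2*y^2, y)‖ < r/2 := by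
  intro τ hτ
  by_contra hcon
  push_neg at hcon
  have hχcont : Continuous χ := by
    rw [continuous_iff_continuousAt]; exact fun t => (hχ t).continuousAt
  have hncont : Continuous (fun s => ‖χ s - (d2*y^2, y)‖) :=
    (hχcont.sub continuous_const).norm
  set S : Set ℝ := {s | 0 ≤ s ∧ r/2 ≤ ‖χ s - (d2*y^2, y)‖} with hS
  have hSclosed : IsClosed S := by
    have : S = Set.Ici (0:ℝ) ∩ (fun s => ‖χ s - (d2*y^2, y)‖) ⁻¹' Set.Ici (r/2) := rfl
    rw [this]
    exact isClosed_Ici.inter (isClosed_Ici.preimage hncont)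
  have hSne : S.Nonempty := ⟨τ, hτ, hcon⟩
  have hSbdd : BddBelow S := ⟨0, fun x hx => hx.1⟩
  set T := sInf S with hT
  have hTS : T ∈ S := hSclosed.csInf_mem hSne hSbdd
  have hT0 : 0 ≤ T := hTS.1
  have hlt : ∀ s, 0 ≤ s → s < T → ‖χ s - (d2*y^2, y)‖ < r/2 := by
    intro s hs0 hsT
    by_contra hc
    push_neg at hc
    exact absurd (csInf_le hSbdd ⟨hs0, hc⟩) (not_le.mpr hsT)
  have hTpos : 0 < T := by
    rcases eq_or_lt_of_le hT0 with h | h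
    · exfalso; have := hTS.2; rw [← h] at this; linarith
    · exact h
  have hTle : ‖χ T - (d2*y^2, y)‖ ≤ r/2 := by
    have hC : IsClosed {s : ℝ | ‖χ s - (d2*y^2, y)‖ ≤ r/2} :=
      isClosed_le hncont continuous_const
    have hsub : Set.Ico (0:ℝ) T ⊆ {s : ℝ | ‖χ s - (d2*y^2, y)‖ ≤ r/2} :=
      fun s hs => le_of_lt (hlt s hs.1 hs.2)
    have hcl : Set.Icc (0:ℝ) T ⊆ {s : ℝ | ‖χ s - (d2*y^2, y)‖ ≤ r/2} := by
      rw [← closure_Ico (ne_of_lt hTpos)]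
      exact hC.closure_subset_iff.mpr hsub
    exact hcl ⟨hT0, le_refl T⟩
  have hstrip : ∀ s ∈ Set.Icc (0:ℝ) T, |(χ s).2 - y| ≤ y/2 := by
    intro s hs
    have hns : ‖χ s - (d2*y^2, y)‖ ≤ r/2 := by
      rcases eq_or_lt_of_le hs.2 with h | h
      · rw [h]; exact hTle
      · exact le_of_lt (hlt s hs.1 h)
    have := (err_facts χ d2 y s).2.1
    linarith [this, hns, (by linarith : r/2 ≤ y/2)]
  have hmono := lyapV_mono d2 y k ε hd2 hy hk hε hε2 hεA χ hχ T hT0 hstrip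
  -- bounds at 0 and T
  have hstrip0 : |(χ 0).2 - y| ≤ y/2 := hstrip 0 ⟨le_refl _, hT0⟩
  have hstripT : |(χ T).2 - y| ≤ y/2 := hstrip T ⟨hT0, le_refl _⟩
  have hb0 := lyapV_bounds d2 y k ε hy hk hε hε2 (χ 0) hstrip0
  have hbT := lyapV_bounds d2 y k ε hy hk hε hε2 (χ T) hstripT
  have he0 := err_facts χ d2 y 0
  have heT := err_facts χ d2 y T
  -- V(χ 0) < 3 r^2/128
  have hq0 : ((χ 0).1 - d2*y^2)^2 + ((χ 0).2 - y)^2 < 2*(r/16)^2 := by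
    have h1 := he0.1; have h2 := he0.2.1
    nlinarith [abs_nonneg ((χ 0).1 - d2*y^2), abs_nonneg ((χ 0).2 - y),
      sq_abs ((χ 0).1 - d2*y^2), sq_abs ((χ 0).2 - y), norm_nonneg (χ 0 - (d2*y^2, y))]
  have hV0 : lyapV d2 y k ε (χ 0) < 3*(2*(r/16)^2) := by nlinarith [hb0.2]
  -- V(χ T) ≥ r^2/32
  have hqT : (r/2)^2 ≤ ((χ T).1 - d2*y^2)^2 + ((χ T).2 - y)^2 := by
    have h3 := heT.2.2
    nlinarith [hTS.2, norm_nonneg (χ T - (d2*y^2, y))]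
  have hVT : r^2/32 ≤ lyapV d2 y k ε (χ T) := by nlinarith [hbT.1]
  have hexp1 : (1:ℝ) ≤ Real.exp ((ε/(24*y)) * T) := by
    rw [Real.one_le_exp_iff]
    positivity
  nlinarith [hmono, hexp1, hVT, hV0, sq_nonneg r, mul_pos hr0 hr0]



/-- asymptotic stability of the desired equilibrium for the IDA-PBC
u = k·x2/(x2² + (k-1)·y⋆²), k > 3, with d1 = 0. -/
theorem boost_ida_pbc_zhang_stable
    (d2 ystar k : ℝ) (hd2 : 0 < d2) (hy : 0 < ystar) (hk : 3 < k)
    (u : ℝ → ℝ)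
    (hu : ∀ x2 : ℝ, u x2 = k * x2 / (x2 ^ 2 + (k - 1) * ystar ^ 2))
    (f : ℝ × ℝ → ℝ × ℝ)
    (hf : ∀ x : ℝ × ℝ, f x = (1 - x.2 * u x.2, -d2 * x.2 + x.1 * u x.2))
    (xstar : ℝ × ℝ) (hxstar : xstar = (d2 * ystar ^ 2, ystar)) :
    f xstar = 0 ∧
    (∀ ε > (0 : ℝ), ∃ δ > (0 : ℝ), ∀ χ : ℝ → ℝ × ℝ,
      (∀ τ : ℝ, HasDerivAt χ (f (χ τ)) τ) →
      ‖χ 0 - xstar‖ < δ → ∀ τ : ℝ, 0 ≤ τ → ‖χ τ - xstar‖ < ε) ∧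
    (∃ δ > (0 : ℝ), ∀ χ : ℝ → ℝ × ℝ,
      (∀ τ : ℝ, HasDerivAt χ (f (χ τ)) τ) →
      ‖χ 0 - xstar‖ < δ →
      Filter.Tendsto χ Filter.atTop (nhds xstar)) := by
  have hkpos : (0:ℝ) < k := by linarith
  have hk1 : (0:ℝ) < k - 1 := by linarith
  -- choice of the cross-term weight
  set A := (k-1)*(5*ystar/2) + (225/16)*d2^2*ystar^3/k + k*ystar/4 with hAdef
  set B := (9/4)*(k-1)*d2*ystar^2/k with hBdef
  have hA : 0 < A := by
    have h1 : (0:ℝ) < (k-1)*(5*ystar/2) := by exact mul_pos hk1 (by positivity)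
    have h2 : (0:ℝ) < (225/16)*d2^2*ystar^3/k := by positivity
    have h3 : (0:ℝ) < k*ystar/4 := by positivity
    rw [hAdef]; linarith
  have hB : 0 < B := by
    rw [hBdef]; apply div_pos ?_ hkpos
    exact mul_pos (mul_pos (mul_pos (by norm_num : (0:ℝ) < 9/4) hk1) hd2) (pow_pos hy 2)
  set ec := min (1/4 : ℝ) (B/A) with hec
  have hε : 0 < ec := lt_min (by norm_num) (div_pos hB hA)
  have hε2 : ec ≤ 1/4 := min_le_left _ _
  have hεA : ec * A ≤ B := by
    calc ec * A ≤ (B/A) * A := mul_le_mul_of_nonneg_right (min_le_right _ _) hA.le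
      _ = B := div_mul_cancel₀ _ hA.ne'
  -- conversion of the vector field
  have hsol : ∀ (χ : ℝ → ℝ × ℝ), (∀ τ : ℝ, HasDerivAt χ (f (χ τ)) τ) →
      ∀ τ : ℝ, HasDerivAt χ
      (1 - (χ τ).2 * (k*(χ τ).2/((χ τ).2^2+(k-1)*ystar^2)),
        -d2*(χ τ).2 + (χ τ).1 * (k*(χ τ).2/((χ τ).2^2+(k-1)*ystar^2))) τ := by
    intro χ hχ τ
    have := hχ τ
    rwa [hf, hu] at this
  have hden : ystar^2 + (k-1)*ystar^2 ≠ 0 := by nlinarith [pow_pos hy 2]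
  refine ⟨?_, ?_, ?_⟩
  · -- equilibrium
    rw [hxstar, hf, hu]
    have h0 : (0 : ℝ×ℝ) = ((0:ℝ), (0:ℝ)) := rfl
    rw [h0, Prod.mk.injEq]
    constructor
    · show 1 - ystar * (k * ystar / (ystar^2 + (k-1)*ystar^2)) = 0
      field_simp
      ring
    · show -d2 * ystar + d2*ystar^2 * (k * ystar / (ystar^2 + (k-1)*ystar^2)) = 0
      field_simp
      ring
  · -- stability
    intro ε hε0
    refine ⟨(min ε ystar)/16, by positivity, ?_⟩
    intro χ hχ h0
    intro τ hτ
    have hr0 : 0 < min ε ystar := lt_min hε0 hy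
    have := lyapV_invariant d2 ystar k ec hd2 hy hk hε hε2 hεA χ (hsol χ hχ)
      (min ε ystar) hr0 (min_le_right _ _) (by rwa [hxstar] at h0) τ hτ
    rw [hxstar]
    calc ‖χ τ - (d2*ystar^2, ystar)‖ < (min ε ystar)/2 := this
      _ ≤ ε/2 := by have := min_le_left ε ystar; linarith
      _ < ε := by linarith
  · -- attractivity
    refine ⟨ystar/16, by positivity, ?_⟩
    intro χ hχ h0
    have hinv := lyapV_invariant d2 ystar k ec hd2 hy hk hε hε2 hεA χ (hsol χ hχ)
      ystar hy (le_refl _) (by rwa [hxstar] at h0)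
    have hstrip : ∀ s : ℝ, 0 ≤ s → |(χ s).2 - ystar| ≤ ystar/2 := by
      intro s hs
      have h1 := (err_facts χ d2 ystar s).2.1
      have h2 := hinv s hs
      linarith
    set lam := ec/(24*ystar) with hlam
    have hlampos : 0 < lam := by positivity
    set V0 := lyapV d2 ystar k ec (χ 0) with hV0def
    have hVdecay : ∀ τ : ℝ, 0 ≤ τ →
        ‖χ τ - (d2*ystar^2, ystar)‖^2 ≤ (8*V0) * Real.exp (-(lam*τ)) := by
      intro τ hτ
      have hmono := lyapV_mono d2 ystar k ec hd2 hy hk hε hε2 hεA χ (hsol χ hχ) τ hτ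
        (fun s hs => hstrip s hs.1)
      have hmul := mul_le_mul_of_nonneg_right hmono (Real.exp_pos (-(lam*τ))).le
      rw [mul_assoc, ← Real.exp_add] at hmul
      have he : lam*τ + -(lam*τ) = 0 := by ring
      rw [he, Real.exp_zero, mul_one] at hmul
      have hb := lyapV_bounds d2 ystar k ec hy hk hε hε2 (χ τ) (hstrip τ hτ)
      have herr := (err_facts χ d2 ystar τ).2.2
      nlinarith [hmul, hb.1, herr]
    -- limits
    have h1 : Filter.Tendsto (fun τ : ℝ => lam*τ) Filter.atTop Filter.atTop :=
      Filter.Tendsto.const_mul_atTop hlampos Filter.tendsto_id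
    have h2 : Filter.Tendsto (fun τ : ℝ => -(lam*τ)) Filter.atTop Filter.atBot :=
      Filter.tendsto_neg_atTop_atBot.comp h1
    have h3 : Filter.Tendsto (fun τ : ℝ => Real.exp (-(lam*τ))) Filter.atTop (nhds 0) :=
      Real.tendsto_exp_atBot.comp h2
    have h4 : Filter.Tendsto (fun τ : ℝ => (8*V0) * Real.exp (-(lam*τ)))
        Filter.atTop (nhds 0) := by
      have := h3.const_mul (8*V0)
      simpa using this
    have hsq : Filter.Tendsto (fun τ : ℝ => ‖χ τ - (d2*ystar^2, ystar)‖^2)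
        Filter.atTop (nhds 0) := by
      apply squeeze_zero' (Filter.Eventually.of_forall fun τ => sq_nonneg _) ?_ h4
      filter_upwards [Filter.eventually_ge_atTop (0:ℝ)] with τ hτ
      exact hVdecay τ hτ
    have hn : Filter.Tendsto (fun τ : ℝ => ‖χ τ - (d2*ystar^2, ystar)‖)
        Filter.atTop (nhds 0) := by
      have hcont := (Real.continuous_sqrt.tendsto 0).comp hsq
      have heq : (fun τ : ℝ => Real.sqrt (‖χ τ - (d2*ystar^2, ystar)‖^2))
          = fun τ : ℝ => ‖χ τ - (d2*ystar^2, ystar)‖ :=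
        funext fun τ => Real.sqrt_sq (norm_nonneg _)
      rw [Function.comp_def, heq] at hcont
      simpa using hcont
    rw [hxstar]
    exact tendsto_iff_norm_sub_tendsto_zero.mpr hn
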